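/- arXiv:1412.1975 — 2 statements merged into one kernel-verified Lean document; each statement's English description precedes it below -/
import Mathlib

section
/- Let {f_1,…,f_q} be an IFS of injective contractions of a complete metric space whose attractor T is connected, and assume that f_α(T) ∩ f_β(T) is not a singleton for every pair of nonempty finite words α, β over {1,…,q}. Then either T has a cut point, or every irreducible cut set X of T is a perfect set (closed in T with no isolated points). -/
open Set Filter Topology
open scoped ENNReal NNReal

/-- A set is the union of two nonempty separated sets. -/
def SepUnion {α : Type*} [TopologicalSpace α] (S : Set α) : Prop :=
  ∃ U V : Set α, S = U ∪ V ∧ U.Nonempty ∧ V.Nonempty ∧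
    closure U ∩ V = ∅ ∧ U ∩ closure V = ∅

/-- `X` is a cut set of `T`: `X ⊆ T` and `T \ X` is disconnected. -/
def IsCutSet {α : Type*} [TopologicalSpace α] (T X : Set α) : Prop :=
  X ⊆ T ∧ SepUnion (T \ X)

/-- `X` is an irreducible cut set of `T`. -/
def IsIrredCutSet {α : Type*} [TopologicalSpace α] (T X : Set α) : Prop :=
  IsCutSet T X ∧ ∀ X₀ : Set α, X₀ ⊂ X → closure X₀ ∩ T ⊆ X₀ → ¬ SepUnion (T \ X₀)

/-- `f_α` for a word `α` (a list of indices): composition of the maps. -/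
def wordMap {α : Type*} {q : ℕ} (f : Fin q → α → α) : List (Fin q) → α → α :=
  fun l => l.foldr (fun i g => f i ∘ g) id

section Helpers

variable {α : Type*} [TopologicalSpace α]

lemma sepUnion_of_image {β : Type*} [TopologicalSpace β] {g : β → α} (hg : Continuous g)
    {S : Set β} (h : SepUnion (g '' S)) : SepUnion S := by
  obtain ⟨U, V, hUV, hUne, hVne, hcUV, hUcV⟩ := h
  refine ⟨S ∩ g ⁻¹' U, S ∩ g ⁻¹' V, ?_, ?_, ?_, ?_, ?_⟩
  · apply Set.eq_of_subset_of_subset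
    · intro s hs
      have : g s ∈ U ∪ V := hUV ▸ mem_image_of_mem g hs
      rcases this with h' | h'
      · exact Or.inl ⟨hs, h'⟩
      · exact Or.inr ⟨hs, h'⟩
    · rintro s (⟨hs, _⟩ | ⟨hs, _⟩) <;> exact hs
  · obtain ⟨u, hu⟩ := hUne
    have : u ∈ g '' S := hUV ▸ Or.inl hu
    obtain ⟨s, hsS, rfl⟩ := this
    exact ⟨s, hsS, hu⟩
  · obtain ⟨v, hv⟩ := hVne
    have : v ∈ g '' S := hUV ▸ Or.inr hv
    obtain ⟨s, hsS, rfl⟩ := this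
    exact ⟨s, hsS, hv⟩
  · apply eq_empty_iff_forall_notMem.2
    rintro s ⟨hcl, hsS, hsV⟩
    have hgs : g s ∈ closure U := by
      have h1 : g s ∈ g '' closure (S ∩ g ⁻¹' U) := mem_image_of_mem g hcl
      have h2 : g '' closure (S ∩ g ⁻¹' U) ⊆ closure (g '' (S ∩ g ⁻¹' U)) :=
        image_closure_subset_closure_image hg
      have h3 : closure (g '' (S ∩ g ⁻¹' U)) ⊆ closure U := by
        apply closure_mono
        rintro t ⟨s', ⟨_, hs'⟩, rfl⟩
        exact hs'
      exact h3 (h2 h1)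
    have : g s ∈ closure U ∩ V := ⟨hgs, hsV⟩
    rw [hcUV] at this
    exact this
  · apply eq_empty_iff_forall_notMem.2
    rintro s ⟨⟨hsS, hsU⟩, hcl⟩
    have hgs : g s ∈ closure V := by
      have h1 : g s ∈ g '' closure (S ∩ g ⁻¹' V) := mem_image_of_mem g hcl
      have h2 : g '' closure (S ∩ g ⁻¹' V) ⊆ closure (g '' (S ∩ g ⁻¹' V)) :=
        image_closure_subset_closure_image hg
      have h3 : closure (g '' (S ∩ g ⁻¹' V)) ⊆ closure V := by
        apply closure_mono
        rintro t ⟨s', ⟨_, hs'⟩, rfl⟩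
        exact hs'
      exact h3 (h2 h1)
    have : g s ∈ U ∩ closure V := ⟨hsU, hgs⟩
    rw [hUcV] at this
    exact this

end Helpers

section Words
set_option linter.unusedSectionVars false

variable {α : Type*} [MetricSpace α] {q : ℕ} {f : Fin q → α → α}

lemma wordMap_cons (i : Fin q) (l : List (Fin q)) :
    wordMap f (i :: l) = f i ∘ wordMap f l := rfl

lemma wordMap_nil : wordMap f ([] : List (Fin q)) = id := rfl

lemma word_cover {T : Set α} (hattr : T = ⋃ i, f i '' T) :
    ∀ n, ∀ t ∈ T, ∃ l : List (Fin q), l.length = n ∧ t ∈ wordMap f l '' T := by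
  intro n
  induction n with
  | zero => exact fun t ht => ⟨[], rfl, ⟨t, ht, rfl⟩⟩
  | succ n ih =>
    intro t ht
    have h1 : t ∈ ⋃ i, f i '' T := hattr ▸ ht
    obtain ⟨i, s, hs, rfl⟩ := by simpa using h1
    obtain ⟨l, hl, s', hs', hss⟩ := ih s hs
    exact ⟨i :: l, by simp [hl], ⟨s', hs', by simp [wordMap_cons, hss]⟩⟩

lemma word_image_subset {T : Set α} (hattr : T = ⋃ i, f i '' T) :
    ∀ l : List (Fin q), wordMap f l '' T ⊆ T := by
  intro l
  induction l with
  | nil => simp [wordMap_nil]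
  | cons i l ih =>
    rintro t ⟨s, hs, rfl⟩
    have h1 : wordMap f l s ∈ T := ih ⟨s, hs, rfl⟩
    have h2 : f i (wordMap f l s) ∈ ⋃ j, f j '' T := mem_iUnion.2 ⟨i, ⟨_, h1, rfl⟩⟩
    rw [wordMap_cons]
    show f i (wordMap f l s) ∈ T
    rw [hattr]
    exact h2

lemma word_injective (hinj : ∀ i, Function.Injective (f i)) :
    ∀ l : List (Fin q), Function.Injective (wordMap f l) := by
  intro l
  induction l with
  | nil => exact fun a b h => h
  | cons i l ih =>
    rw [wordMap_cons]
    exact (hinj i).comp ih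

lemma word_lipschitz {r : NNReal} (hf : ∀ i, LipschitzWith r (f i)) :
    ∀ l : List (Fin q), LipschitzWith (r ^ l.length) (wordMap f l) := by
  intro l
  induction l with
  | nil => simpa [wordMap_nil] using LipschitzWith.id (α := α)
  | cons i l ih =>
    rw [wordMap_cons, List.length_cons, pow_succ']
    exact (hf i).comp ih

lemma word_continuous {r : NNReal} (hf : ∀ i, LipschitzWith r (f i))
    (l : List (Fin q)) : Continuous (wordMap f l) :=
  (word_lipschitz hf l).continuous

end Words

theorem statement1 {α : Type*} [MetricSpace α] [CompleteSpace α] {q : ℕ}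
    (f : Fin q → α → α)
    (hinj : ∀ i, Function.Injective (f i))
    (hcon : ∀ i, ∃ K, ContractingWith K (f i))
    (T : Set α) (hne : T.Nonempty) (hcpt : IsCompact T)
    (hattr : T = ⋃ i, f i '' T) (hconn : IsConnected T)
    (hnosing : ∀ a b : List (Fin q), a ≠ [] → b ≠ [] →
      ¬ ∃ x, wordMap f a '' T ∩ wordMap f b '' T = {x}) :
    (∃ z ∈ T, SepUnion (T \ {z})) ∨
      ∀ X : Set α, IsIrredCutSet T X → Perfect X := by
  by_cases hz : ∃ z ∈ T, SepUnion (T \ {z})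
  · exact Or.inl hz
  right
  intro X hX
  obtain ⟨⟨hXT, hsep⟩, hirr⟩ := hX
  obtain ⟨U, V, hUV, hUne, hVne, hclUV, hUclV⟩ := hsep
  -- basic facts about the separation
  have hUsub : U ⊆ T \ X := by rw [hUV]; exact subset_union_left
  have hVsub : V ⊆ T \ X := by rw [hUV]; exact subset_union_right
  have hUT : U ⊆ T := fun u hu => (hUsub hu).1
  have hVT : V ⊆ T := fun v hv => (hVsub hv).1
  have hdecomp : ∀ t ∈ T, t ∈ X ∨ t ∈ U ∨ t ∈ V := by
    intro t ht
    by_cases h : t ∈ X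
    · exact Or.inl h
    · have : t ∈ T \ X := ⟨ht, h⟩
      rw [hUV] at this
      exact Or.inr this
  have hUVdisj : ∀ t, t ∈ U → t ∈ V → False := by
    intro t hU hV
    have : t ∈ U ∩ closure V := ⟨hU, subset_closure hV⟩
    rw [hUclV] at this
    exact this
  have hUclVd : ∀ t, t ∈ U → t ∈ closure V → False := by
    intro t hU hV
    have : t ∈ U ∩ closure V := ⟨hU, hV⟩
    rw [hUclV] at this
    exact this
  have hclUVd : ∀ t, t ∈ closure U → t ∈ V → False := by
    intro t hU hV
    have : t ∈ closure U ∩ V := ⟨hU, hV⟩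
    rw [hclUV] at this
    exact this
  -- Step 1: every point of T lies in closure U or closure V
  have hG : ∀ t ∈ T, t ∈ closure U ∨ t ∈ closure V := by
    by_contra hc
    push_neg at hc
    obtain ⟨g, hgT, hgU, hgV⟩ := hc
    have hgX : g ∈ X := by
      rcases hdecomp g hgT with h | h | h
      · exact h
      · exact absurd (subset_closure h) hgU
      · exact absurd (subset_closure h) hgV
    have hopen : (closure U ∪ closure V)ᶜ ∈ 𝓝 g :=
      (isClosed_closure.union isClosed_closure).isOpen_compl.mem_nhds (by simp [hgU, hgV])
    obtain ⟨ρ₀, hρ₀, hball⟩ := Metric.mem_nhds_iff.1 hopen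
    set ρ := ρ₀ / 3 with hρdef
    have hρpos : 0 < ρ := by positivity
    have hρlt : ρ < ρ₀ := by rw [hρdef]; linarith
    set K := T ∩ {y | dist y g = ρ} with hKdef
    have hKX : K ⊆ X := by
      rintro y ⟨hyT, hyd⟩
      have hyb : y ∈ Metric.ball g ρ₀ := by rw [Metric.mem_ball, hyd]; exact hρlt
      have hy := hball hyb
      rcases hdecomp y hyT with h | h | h
      · exact h
      · exact absurd (Or.inl (subset_closure h)) hy
      · exact absurd (Or.inr (subset_closure h)) hy
    have hKss : K ⊂ X := by
      refine ⟨hKX, fun hXK => ?_⟩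
      have hgK := hXK hgX
      have : dist g g = ρ := hgK.2
      rw [dist_self] at this
      exact absurd this.symm (ne_of_gt hρpos)
    have hKclosed : IsClosed K :=
      hcpt.isClosed.inter (isClosed_eq (continuous_id.dist continuous_const) continuous_const)
    apply hirr K hKss (by rw [hKclosed.closure_eq]; exact inter_subset_left)
    refine ⟨{y ∈ T | dist y g < ρ}, {y ∈ T | ρ < dist y g}, ?_,
      ⟨g, hgT, by simpa [dist_self] using hρpos⟩, ?_, ?_, ?_⟩
    · ext y
      constructor
      · rintro ⟨hyT, hyK⟩
        have hne' : dist y g ≠ ρ := fun h => hyK ⟨hyT, h⟩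
        rcases lt_or_gt_of_ne hne' with h | h
        · exact Or.inl ⟨hyT, h⟩
        · exact Or.inr ⟨hyT, h⟩
      · rintro (⟨hyT, h⟩ | ⟨hyT, h⟩) <;>
          exact ⟨hyT, fun hk => absurd hk.2 (by intro he; rw [he] at h; exact lt_irrefl _ h)⟩
    · obtain ⟨u, hu⟩ := hUne
      refine ⟨u, hUT hu, ?_⟩
      by_contra hle
      push_neg at hle
      have : u ∈ Metric.ball g ρ₀ := by
        rw [Metric.mem_ball]
        calc dist u g ≤ ρ := hle
        _ < ρ₀ := hρlt
      exact (hball this) (Or.inl (subset_closure hu))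
    · apply eq_empty_iff_forall_notMem.2
      rintro y ⟨hycl, hyT, hyd⟩
      have : y ∈ {z | dist z g ≤ ρ} :=
        closure_minimal (fun z hz => le_of_lt hz.2)
          (isClosed_le (continuous_id.dist continuous_const) continuous_const) hycl
      exact absurd this (not_le.2 hyd)
    · apply eq_empty_iff_forall_notMem.2
      rintro y ⟨⟨hyT, hyd⟩, hycl⟩
      have : y ∈ {z | ρ ≤ dist z g} :=
        closure_minimal (fun z hz => le_of_lt hz.2)
          (isClosed_le continuous_const (continuous_id.dist continuous_const)) hycl
      exact absurd this (not_le.2 hyd)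
  -- Step 2: X = Y where Y = T ∩ closure U ∩ closure V
  set Y := T ∩ closure U ∩ closure V with hYdef
  have hYX : Y ⊆ X := by
    rintro y ⟨⟨hyT, hyU⟩, hyV⟩
    rcases hdecomp y hyT with h | h | h
    · exact h
    · exact absurd (hUclVd y h hyV) not_false
    · exact absurd (hclUVd y hyU h) not_false
  have hXY : X = Y := by
    by_contra hne'
    have hss : Y ⊂ X := ⟨hYX, fun h => hne' (Set.eq_of_subset_of_subset h hYX)⟩
    apply hirr Y hss
    · intro t ht
      have h1 : closure Y ⊆ closure U :=
        closure_minimal (fun y hy => hy.1.2) isClosed_closure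
      have h2 : closure Y ⊆ closure V :=
        closure_minimal (fun y hy => hy.2) isClosed_closure
      exact ⟨⟨ht.2, h1 ht.1⟩, h2 ht.1⟩
    refine ⟨T \ closure V, (T ∩ closure V) \ Y, ?_, ?_, ?_, ?_, ?_⟩
    · ext t
      constructor
      · rintro ⟨htT, htY⟩
        by_cases h : t ∈ closure V
        · exact Or.inr ⟨⟨htT, h⟩, htY⟩
        · exact Or.inl ⟨htT, h⟩
      · rintro (⟨htT, h⟩ | ⟨⟨htT, _⟩, htY⟩)
        · exact ⟨htT, fun hy => h hy.2⟩
        · exact ⟨htT, htY⟩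
    · obtain ⟨u, hu⟩ := hUne
      exact ⟨u, hUT hu, fun h => hUclVd u hu h⟩
    · obtain ⟨v, hv⟩ := hVne
      exact ⟨v, ⟨hVT hv, subset_closure hv⟩, fun hy => hclUVd v hy.1.2 hv⟩
    · have hA : T \ closure V ⊆ closure U := by
        rintro t ⟨htT, htV⟩
        rcases hG t htT with h | h
        · exact h
        · exact absurd h htV
      apply eq_empty_iff_forall_notMem.2
      rintro t ⟨htc, ⟨htT, htV⟩, htY⟩
      have : t ∈ closure U := closure_minimal hA isClosed_closure htc
      exact htY ⟨⟨htT, this⟩, htV⟩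
    · apply eq_empty_iff_forall_notMem.2
      rintro t ⟨⟨htT, htV⟩, htc⟩
      have : t ∈ closure V :=
        closure_minimal (fun y hy => hy.1.2) isClosed_closure htc
      exact htV this
  -- Step 3: X is closed
  have hXcl : IsClosed X := by
    rw [hXY, hYdef]
    exact (hcpt.isClosed.inter isClosed_closure).inter isClosed_closure
  refine ⟨hXcl, ?_⟩
  -- Step 4: X is preperfect
  intro x hx
  by_contra hacc
  rw [accPt_iff_nhds] at hacc
  push_neg at hacc
  obtain ⟨O, hO, hOX⟩ := hacc
  have hxT : x ∈ T := hXT hx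
  have hxY : x ∈ Y := hXY ▸ hx
  have hxclU : x ∈ closure U := hxY.1.2
  have hxclV : x ∈ closure V := hxY.2
  have hxU : x ∉ U := fun h => (hUsub h).2 hx
  have hxV : x ∉ V := fun h => (hVsub h).2 hx
  obtain ⟨ε', hε', hballO⟩ := Metric.mem_nhds_iff.1 hO
  -- the IFS machinery
  have hq : 0 < q := by
    rcases Nat.eq_zero_or_pos q with h | h
    · subst h
      obtain ⟨t, ht⟩ := hne
      rw [hattr] at ht
      obtain ⟨i, -⟩ := mem_iUnion.1 ht
      exact i.elim0
    · exact h
  choose Kf hKf using hcon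
  set r : NNReal := Finset.univ.sup Kf with hrdef
  have hr1 : r < 1 := by
    apply (Finset.sup_lt_iff (by norm_num : (⊥ : NNReal) < 1)).2
    intro i _
    exact (hKf i).1
  have hrf : ∀ i, LipschitzWith r (f i) :=
    fun i => (hKf i).2.weaken (Finset.le_sup (Finset.mem_univ i))
  have hDne : EMetric.diam T ≠ ⊤ := Metric.isBounded_iff_ediam_ne_top.1 hcpt.isBounded
  have htend : Tendsto (fun n : ℕ => (r : ℝ≥0∞) ^ n * EMetric.diam T) atTop (𝓝 0) := by
    have h0 : Tendsto (fun n : ℕ => (r : ℝ≥0∞) ^ n) atTop (𝓝 0) :=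
      ENNReal.tendsto_pow_atTop_nhds_zero_of_lt_one (by exact_mod_cast hr1)
    have := ENNReal.Tendsto.mul_const h0 (Or.inr hDne)
    simpa using this
  have hev : ∀ᶠ n : ℕ in atTop, (r : ℝ≥0∞) ^ n * EMetric.diam T < ENNReal.ofReal ε' :=
    htend.eventually_lt_const (ENNReal.ofReal_pos.2 hε')
  obtain ⟨n, hn1, hnd⟩ := ((eventually_ge_atTop 1).and hev).exists
  -- pieces of level n
  have hpieceT : ∀ w : List.Vector (Fin q) n, wordMap f w.1 '' T ⊆ T :=
    fun w => word_image_subset hattr w.1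
  have hpiece_cpt : ∀ w : List.Vector (Fin q) n, IsCompact (wordMap f w.1 '' T) :=
    fun w => hcpt.image (word_continuous hrf w.1)
  have hdiam : ∀ w : List.Vector (Fin q) n, ∀ t ∈ wordMap f w.1 '' T,
      ∀ s ∈ wordMap f w.1 '' T, dist t s < ε' := by
    intro w t ht s hs
    have h1 : EMetric.diam (wordMap f w.1 '' T) ≤ (r : ℝ≥0∞) ^ n * EMetric.diam T := by
      calc EMetric.diam (wordMap f w.1 '' T) ≤ ↑(r ^ w.1.length) * EMetric.diam T :=
            (word_lipschitz hrf w.1).ediam_image_le T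
      _ = (r : ℝ≥0∞) ^ n * EMetric.diam T := by rw [w.2, ENNReal.coe_pow]
    have h2 : edist t s < ENNReal.ofReal ε' :=
      lt_of_le_of_lt ((EMetric.edist_le_diam_of_mem ht hs).trans h1) hnd
    exact edist_lt_ofReal.1 h2
  have hcover : ∀ t ∈ T, ∃ w : List.Vector (Fin q) n, t ∈ wordMap f w.1 '' T := by
    intro t ht
    obtain ⟨l, hl, hm⟩ := word_cover hattr n t ht
    exact ⟨⟨l, hl⟩, hm⟩
  -- Q: union of the pieces avoiding x
  have hQcl : IsClosed (⋃ w : {w : List.Vector (Fin q) n // x ∉ wordMap f w.1 '' T},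
      wordMap f w.1.1 '' T) :=
    isClosed_iUnion_of_finite (fun w => (hpiece_cpt w.1).isClosed)
  have hxQ : x ∉ ⋃ w : {w : List.Vector (Fin q) n // x ∉ wordMap f w.1 '' T},
      wordMap f w.1.1 '' T := by
    intro h
    obtain ⟨w, hw⟩ := mem_iUnion.1 h
    exact w.2 hw
  obtain ⟨δ, hδ, hballQ⟩ := Metric.mem_nhds_iff.1 (hQcl.isOpen_compl.mem_nhds hxQ)
  have hnear : ∀ t ∈ T, dist t x < δ →
      ∃ w : List.Vector (Fin q) n, x ∈ wordMap f w.1 '' T ∧ t ∈ wordMap f w.1 '' T := by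
    intro t ht hd
    obtain ⟨w, hw⟩ := hcover t ht
    by_cases hxw : x ∈ wordMap f w.1 '' T
    · exact ⟨w, hxw, hw⟩
    · exfalso
      have hQ : t ∈ ⋃ w : {w : List.Vector (Fin q) n // x ∉ wordMap f w.1 '' T},
          wordMap f w.1.1 '' T := mem_iUnion.2 ⟨⟨w, hxw⟩, hw⟩
      exact (hballQ (by rwa [Metric.mem_ball])) hQ
  -- pieces containing x have punctured part inside U ∪ V
  have hpieceO : ∀ w : List.Vector (Fin q) n, x ∈ wordMap f w.1 '' T →
      ∀ t ∈ wordMap f w.1 '' T, t ≠ x → t ∈ U ∪ V := by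
    intro w hxw t htw htx
    have htT : t ∈ T := hpieceT w htw
    have hdist : dist t x < ε' := hdiam w t htw x hxw
    have htO : t ∈ O := hballO (by rwa [Metric.mem_ball])
    rcases hdecomp t htT with h | h | h
    · exact absurd (hOX t ⟨htO, h⟩) htx
    · exact Or.inl h
    · exact Or.inr h
  -- pick nearby points of U and V and pieces through them
  obtain ⟨u', hu'U, hu'd⟩ := Metric.mem_closure_iff.1 hxclU δ hδ
  obtain ⟨v', hv'V, hv'd⟩ := Metric.mem_closure_iff.1 hxclV δ hδ
  obtain ⟨wA, hxA, huA⟩ := hnear u' (hUT hu'U) (by rw [dist_comm]; exact hu'd)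
  obtain ⟨wB, hxB, hvB⟩ := hnear v' (hVT hv'V) (by rw [dist_comm]; exact hv'd)
  -- a piece containing x meeting both U and V yields a cut point: contradiction
  have hcut : ∀ w : List.Vector (Fin q) n, x ∈ wordMap f w.1 '' T →
      (wordMap f w.1 '' T ∩ U).Nonempty → (wordMap f w.1 '' T ∩ V).Nonempty → False := by
    rintro w hxw ⟨a, haw, haU⟩ ⟨b, hbw, hbV⟩
    have hsep' : SepUnion (wordMap f w.1 '' T \ {x}) := by
      refine ⟨wordMap f w.1 '' T ∩ U, wordMap f w.1 '' T ∩ V, ?_,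
        ⟨a, haw, haU⟩, ⟨b, hbw, hbV⟩, ?_, ?_⟩
      · ext t
        constructor
        · rintro ⟨htw, htx⟩
          rcases hpieceO w hxw t htw (fun he => htx (he ▸ rfl)) with h | h
          · exact Or.inl ⟨htw, h⟩
          · exact Or.inr ⟨htw, h⟩
        · rintro (⟨htw, htU⟩ | ⟨htw, htV⟩)
          · exact ⟨htw, fun he => hxU (by rwa [mem_singleton_iff.1 he] at htU)⟩
          · exact ⟨htw, fun he => hxV (by rwa [mem_singleton_iff.1 he] at htV)⟩
      · apply eq_empty_iff_forall_notMem.2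
        rintro t ⟨htc, -, htV⟩
        exact hclUVd t (closure_mono inter_subset_right htc) htV
      · apply eq_empty_iff_forall_notMem.2
        rintro t ⟨⟨-, htU⟩, htc⟩
        exact hUclVd t htU (closure_mono inter_subset_right htc)
    obtain ⟨z, hzT, hzx⟩ := hxw
    have himg : wordMap f w.1 '' T \ {x} = wordMap f w.1 '' (T \ {z}) := by
      ext t
      constructor
      · rintro ⟨⟨s, hsT, rfl⟩, hts⟩
        refine ⟨s, ⟨hsT, fun he => hts ?_⟩, rfl⟩
        rw [mem_singleton_iff] at he ⊢
        rw [he, hzx]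
      · rintro ⟨s, ⟨hsT, hsz⟩, rfl⟩
        refine ⟨⟨s, hsT, rfl⟩, fun he => hsz ?_⟩
        rw [mem_singleton_iff] at he ⊢
        exact word_injective hinj w.1 (by rw [he, hzx])
    rw [himg] at hsep'
    exact hz ⟨z, hzT, sepUnion_of_image (word_continuous hrf w.1) hsep'⟩
  by_cases hAV : (wordMap f wA.1 '' T ∩ V).Nonempty
  · exact hcut wA hxA ⟨u', huA, hu'U⟩ hAV
  by_cases hBU : (wordMap f wB.1 '' T ∩ U).Nonempty
  · exact hcut wB hxB hBU ⟨v', hvB, hv'V⟩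
  -- final: two pieces meeting exactly in x, contradicting hnosing
  apply hnosing wA.1 wB.1
  · intro h
    have := wA.2
    rw [h] at this
    simp at this
    omega
  · intro h
    have := wB.2
    rw [h] at this
    simp at this
    omega
  refine ⟨x, ?_⟩
  apply Set.eq_singleton_iff_unique_mem.2
  refine ⟨⟨hxA, hxB⟩, ?_⟩
  rintro t ⟨htA, htB⟩
  by_contra htx
  have htU : t ∈ U := by
    rcases hpieceO wA hxA t htA htx with h | h
    · exact h
    · exact absurd ⟨t, htA, h⟩ hAV
  have htV : t ∈ V := by
    rcases hpieceO wB hxB t htB htx with h | h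
    · exact absurd ⟨t, htB, h⟩ hBU
    · exact h
  exact hUVdisj t htU htV
end

section
/- Let T be a connected ℤ^d-tile T(A,D). Then one of the following alternatives holds: either T has a cut point, or every irreducible cut set X of T admits a partition X = X' ∪ X₁ (X' being the derived set of X) with X₁ contained in the set Ẽ := ⋃_{k∈ℕ} ⋃_{v,s∈ℤ^d, T∩(T+s) a singleton} ( A^{-k}(T ∩ (T+s)) + A^{-k}v ); in particular every isolated point of X lies in Ẽ. -/
open Set Filter Topology Matrix

noncomputable section

/-- The real matrix obtained from an integer matrix. -/
def rmat {d : ℕ} (A : Matrix (Fin d) (Fin d) ℤ) : Matrix (Fin d) (Fin d) ℝ :=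
  A.map Int.cast

/-- The real vector obtained from an integer vector. -/
def rvec {d : ℕ} (v : Fin d → ℤ) : Fin d → ℝ := fun i => (v i : ℝ)

/-- The translate `T + v` of `T` by a lattice vector `v`. -/
def trT {d : ℕ} (T : Set (Fin d → ℝ)) (v : Fin d → ℤ) : Set (Fin d → ℝ) :=
  (fun x => x + rvec v) '' T

/-- Every complex eigenvalue of `A` has modulus `> 1`. -/
def Expanding {d : ℕ} (A : Matrix (Fin d) (Fin d) ℤ) : Prop :=
  ∀ μ : ℂ, Module.End.HasEigenvalue (Matrix.toLin' (A.map (Int.cast : ℤ → ℂ))) μ →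
    1 < ‖μ‖

/-- `D` is a complete set of coset representatives of `ℤ^d / A ℤ^d`. -/
def ResidueSystem {d : ℕ} (A : Matrix (Fin d) (Fin d) ℤ) (D : Set (Fin d → ℤ)) : Prop :=
  ∀ x : Fin d → ℤ, ∃! e, e ∈ D ∧ ∃ y : Fin d → ℤ, x = A.mulVec y + e

/-- `T` is the attractor `T(A,D)`: nonempty, compact, with `A·T = T + D`. -/
def SelfAffine {d : ℕ} (A : Matrix (Fin d) (Fin d) ℤ) (D : Set (Fin d → ℤ))
    (T : Set (Fin d → ℝ)) : Prop :=
  T.Nonempty ∧ IsCompact T ∧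
    (rmat A).mulVec '' T = ⋃ e ∈ D, (fun x => x + rvec e) '' T

/-- `T = T(A,D)` is a `ℤ^d`-tile: a self-affine attractor for an expanding integer
matrix and a standard digit set, with nonempty interior, tiling `ℝ^d` by `ℤ^d`. -/
def IsZdTile {d : ℕ} (A : Matrix (Fin d) (Fin d) ℤ) (D : Set (Fin d → ℤ))
    (T : Set (Fin d → ℝ)) : Prop :=
  Expanding A ∧ ResidueSystem A D ∧ SelfAffine A D T ∧ (interior T).Nonempty ∧
    (⋃ v : Fin d → ℤ, trT T v) = univ ∧
    Pairwise fun v₁ v₂ : Fin d → ℤ => interior (trT T v₁) ∩ trT T v₂ = ∅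

/-- `V_n = D + A·D + ⋯ + A^{n-1}·D`, the vertex set of the `n`-th Hata graph. -/
def Vset {d : ℕ} (A : Matrix (Fin d) (Fin d) ℤ) (D : Set (Fin d → ℤ)) (n : ℕ) :
    Set (Fin d → ℤ) :=
  {v | ∃ dig : Fin n → (Fin d → ℤ), (∀ k, dig k ∈ D) ∧
    v = ∑ k : Fin n, (A ^ (k : ℕ)).mulVec (dig k)}

/-- The set of children `C(U) = A·U + D`. -/
def childSet {d : ℕ} (A : Matrix (Fin d) (Fin d) ℤ) (D : Set (Fin d → ℤ))
    (U : Set (Fin d → ℤ)) : Set (Fin d → ℤ) :=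
  {w | ∃ u ∈ U, ∃ e ∈ D, w = A.mulVec u + e}

/-- `X_n(W) = ⋃_{v ∈ W} A^{-n}(T + v)`. -/
def XnSet {d : ℕ} (A : Matrix (Fin d) (Fin d) ℤ) (T : Set (Fin d → ℝ)) (n : ℕ)
    (W : Set (Fin d → ℤ)) : Set (Fin d → ℝ) :=
  ⋃ v ∈ W, ((rmat A)⁻¹ ^ n).mulVec '' trT T v

/-- The subgraph of the `n`-th Hata graph induced on `W` is connected:
any two vertices of `W` are joined by a path inside `W`, consecutive tiles meeting. -/
def HataConn {d : ℕ} (T : Set (Fin d → ℝ)) (W : Set (Fin d → ℤ)) : Prop :=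
  ∀ v ∈ W, ∀ w ∈ W,
    Relation.ReflTransGen (fun a b => a ∈ W ∧ b ∈ W ∧ (trT T a ∩ trT T b).Nonempty) v w


-- ===================== auxiliary lemmas =====================

attribute [local instance] Matrix.linftyOpNormedRing Matrix.linftyOpNormedAlgebra

section TopologyLemmas

variable {α : Type*} [TopologicalSpace α]

theorem isPreconnected_of_not_sepUnion {S : Set α}
    (h : ¬ SepUnion S) : IsPreconnected S := by
  intro u v hu hv hsuv hsu hsv
  by_contra hne
  rw [not_nonempty_iff_eq_empty] at hne
  apply h
  refine ⟨S ∩ u, S \ u, ?_, hsu, ?_, ?_, ?_⟩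
  · ext z; constructor
    · intro hz
      by_cases hzu : z ∈ u
      · exact Or.inl ⟨hz, hzu⟩
      · exact Or.inr ⟨hz, hzu⟩
    · rintro (⟨hz, _⟩ | ⟨hz, _⟩) <;> exact hz
  · obtain ⟨y, hyS, hyv⟩ := hsv
    refine ⟨y, hyS, fun hyu => ?_⟩
    exact absurd (show y ∈ S ∩ (u ∩ v) from ⟨hyS, hyu, hyv⟩) (by simp [hne])
  · ext z; simp only [Set.mem_inter_iff, Set.mem_diff, Set.mem_empty_iff_false, iff_false,
      not_and, and_imp]
    intro hzc hzS hzu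
    have hzv : z ∈ v := (hsuv hzS).resolve_left hzu
    obtain ⟨w, hwv, hwS, hwu⟩ := mem_closure_iff.mp hzc v hv hzv
    exact absurd (show w ∈ S ∩ (u ∩ v) from ⟨hwS, hwu, hwv⟩) (by simp [hne])
  · ext z; simp only [Set.mem_inter_iff, Set.mem_empty_iff_false, iff_false, not_and]
    rintro ⟨hzS, hzu⟩ hzc
    obtain ⟨w, hwu, hwS, hwnu⟩ := mem_closure_iff.mp hzc u hu hzu
    exact hwnu hwu

theorem preconn_subset_or {P U V : Set α}
    (hP : IsPreconnected P) (hPUV : P ⊆ U ∪ V)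
    (h1 : closure U ∩ V = ∅) (h2 : U ∩ closure V = ∅) : P ⊆ U ∨ P ⊆ V := by
  by_cases hPV : (P ∩ V).Nonempty
  · right
    intro z hz
    rcases hPUV hz with h | h
    · exfalso
      have key := hP (closure V)ᶜ (closure U)ᶜ (isClosed_closure.isOpen_compl)
        (isClosed_closure.isOpen_compl) ?_ ?_ ?_
      · obtain ⟨w, hwP, hw1, hw2⟩ := key
        rcases hPUV hwP with hw | hw
        · exact hw2 (subset_closure hw)
        · exact hw1 (subset_closure hw)
      · intro w hwP
        rcases hPUV hwP with hw | hw
        · exact Or.inl fun hc => (Set.eq_empty_iff_forall_notMem.mp h2 w) ⟨hw, hc⟩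
        · exact Or.inr fun hc => (Set.eq_empty_iff_forall_notMem.mp h1 w) ⟨hc, hw⟩
      · exact ⟨z, hz, fun hc => (Set.eq_empty_iff_forall_notMem.mp h2 z) ⟨h, hc⟩⟩
      · obtain ⟨b, hbP, hbV⟩ := hPV
        exact ⟨b, hbP, fun hc => (Set.eq_empty_iff_forall_notMem.mp h1 b) ⟨hc, hbV⟩⟩
    · exact h
  · left
    intro z hz
    rcases hPUV hz with h | h
    · exact h
    · exact absurd ⟨z, hz, h⟩ hPV

end TopologyLemmas

section ClosedLemma

variable {E : Type*} [MetricSpace E]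

theorem irred_cut_closed {T X U V : Set E} (hTcl : IsClosed T) (hXT : X ⊆ T)
    (hTX : T \ X = U ∪ V) (hUne : U.Nonempty) (hVne : V.Nonempty)
    (h1 : closure U ∩ V = ∅) (h2 : U ∩ closure V = ∅)
    (hmin : ∀ X₀ : Set E, X₀ ⊂ X → closure X₀ ∩ T ⊆ X₀ → ¬ SepUnion (T \ X₀)) :
    IsClosed X := by
  classical
  set G : Set E := {a | Metric.infDist a U < Metric.infDist a V} with hG
  set H : Set E := {a | Metric.infDist a V < Metric.infDist a U} with hH
  have hGopen : IsOpen G :=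
    isOpen_lt (Metric.continuous_infDist_pt U) (Metric.continuous_infDist_pt V)
  have hHopen : IsOpen H :=
    isOpen_lt (Metric.continuous_infDist_pt V) (Metric.continuous_infDist_pt U)
  have hUG : U ⊆ G := by
    intro u hu
    have h0 : Metric.infDist u U = 0 := Metric.infDist_zero_of_mem hu
    have hpos : 0 < Metric.infDist u V := by
      rcases lt_or_eq_of_le (Metric.infDist_nonneg (s := V) (x := u)) with h | h
      · exact h
      · exfalso
        have : u ∈ closure V := (Metric.mem_closure_iff_infDist_zero hVne).mpr h.symm
        exact (Set.eq_empty_iff_forall_notMem.mp h2 u) ⟨hu, this⟩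
    simpa [hG, h0] using hpos
  have hVH : V ⊆ H := by
    intro u hu
    have h0 : Metric.infDist u V = 0 := Metric.infDist_zero_of_mem hu
    have hpos : 0 < Metric.infDist u U := by
      rcases lt_or_eq_of_le (Metric.infDist_nonneg (s := U) (x := u)) with h | h
      · exact h
      · exfalso
        have : u ∈ closure U := (Metric.mem_closure_iff_infDist_zero hUne).mpr h.symm
        exact (Set.eq_empty_iff_forall_notMem.mp h1 u) ⟨this, hu⟩
    simpa [hH, h0] using hpos
  set F : Set E := T \ (G ∪ H) with hF
  have hFX : F ⊆ X := by
    rintro z ⟨hzT, hzGH⟩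
    by_contra hzX
    have : z ∈ U ∪ V := by rw [← hTX]; exact ⟨hzT, hzX⟩
    rcases this with h | h
    · exact hzGH (Or.inl (hUG h))
    · exact hzGH (Or.inr (hVH h))
  have hFcl : IsClosed F := hTcl.sdiff (hGopen.union hHopen)
  have hcut : SepUnion (T \ F) := by
    refine ⟨T ∩ G, T ∩ H, ?_, ?_, ?_, ?_, ?_⟩
    · ext z
      constructor
      · rintro ⟨hzT, hz⟩
        have hzGH : z ∈ G ∪ H := by
          by_contra hc
          exact hz ⟨hzT, hc⟩
        rcases hzGH with h | h
        · exact Or.inl ⟨hzT, h⟩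
        · exact Or.inr ⟨hzT, h⟩
      · rintro (⟨hzT, hz⟩ | ⟨hzT, hz⟩)
        · exact ⟨hzT, fun hc => hc.2 (Or.inl hz)⟩
        · exact ⟨hzT, fun hc => hc.2 (Or.inr hz)⟩
    · obtain ⟨u, hu⟩ := hUne
      have huT : u ∈ T := by
        have : u ∈ T \ X := by rw [hTX]; exact Or.inl hu
        exact this.1
      exact ⟨u, huT, hUG hu⟩
    · obtain ⟨v, hv⟩ := hVne
      have hvT : v ∈ T := by
        have : v ∈ T \ X := by rw [hTX]; exact Or.inr hv
        exact this.1
      exact ⟨v, hvT, hVH hv⟩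
    · apply Set.eq_empty_iff_forall_notMem.mpr
      rintro z ⟨hzc, hzT, hzH⟩
      have hle : Metric.infDist z U ≤ Metric.infDist z V := by
        have hsub : closure (T ∩ G) ⊆ {a | Metric.infDist a U ≤ Metric.infDist a V} := by
          apply closure_minimal
          · intro a ha
            exact le_of_lt (show Metric.infDist a U < Metric.infDist a V from ha.2)
          · exact isClosed_le (Metric.continuous_infDist_pt U) (Metric.continuous_infDist_pt V)
        exact hsub hzc
      exact absurd hzH (not_lt.mpr hle)
    · apply Set.eq_empty_iff_forall_notMem.mpr
      rintro z ⟨⟨hzT, hzG⟩, hzc⟩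
      have hle : Metric.infDist z V ≤ Metric.infDist z U := by
        have hsub : closure (T ∩ H) ⊆ {a | Metric.infDist a V ≤ Metric.infDist a U} := by
          apply closure_minimal
          · intro a ha
            exact le_of_lt (show Metric.infDist a V < Metric.infDist a U from ha.2)
          · exact isClosed_le (Metric.continuous_infDist_pt V) (Metric.continuous_infDist_pt U)
        exact hsub hzc
      exact absurd hzG (not_lt.mpr hle)
  have hFeq : F = X := by
    by_contra hne
    exact hmin F (ssubset_of_ne_of_subset hne hFX) (by
      intro z hz
      exact (hFcl.closure_eq ▸ hz.1 : z ∈ F)) hcut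
  rw [← hFeq]; exact hFcl

theorem endgame {T X U V O : Set E} {x : E}
    (hTX : T \ X = U ∪ V) (hVne : V.Nonempty)
    (h1 : closure U ∩ V = ∅) (h2 : U ∩ closure V = ∅)
    (hmin : ∀ X₀ : Set E, X₀ ⊂ X → closure X₀ ∩ T ⊆ X₀ → ¬ SepUnion (T \ X₀))
    (hXT : X ⊆ T) (hXcl : IsClosed X) (hxX : x ∈ X)
    (hO : IsOpen O) (hxO : x ∈ O) (hOX : O ∩ X ⊆ {x})
    (hsub : (O ∩ T) \ {x} ⊆ U) : False := by
  have hxT : x ∈ T := hXT hxX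
  have hVX : V ⊆ T \ X := by rw [hTX]; exact Set.subset_union_right
  have hUX : U ⊆ T \ X := by rw [hTX]; exact Set.subset_union_left
  have hxV : x ∉ V := fun h => (hVX h).2 hxX
  have hxclV : x ∉ closure V := by
    intro hc
    obtain ⟨y, hyO, hyV⟩ := mem_closure_iff.mp hc O hO hxO
    have hyT : y ∈ T := (hVX hyV).1
    have hynx : y ≠ x := fun h => hxV (h ▸ hyV)
    have hyU : y ∈ U := hsub ⟨⟨hyO, hyT⟩, hynx⟩
    exact (Set.eq_empty_iff_forall_notMem.mp h2 y) ⟨hyU, subset_closure hyV⟩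
  set X₀ := X \ {x} with hX₀
  have hss : X₀ ⊂ X := by
    constructor
    · exact Set.diff_subset
    · intro h
      exact (h hxX).2 rfl
  have hcl : closure X₀ ∩ T ⊆ X₀ := by
    rintro z ⟨hzc, hzT⟩
    have hzX : z ∈ X := by
      have hmono : closure X₀ ⊆ closure X := closure_mono Set.diff_subset
      exact hXcl.closure_eq ▸ hmono hzc
    refine ⟨hzX, fun hzx => ?_⟩
    rw [Set.mem_singleton_iff] at hzx
    subst hzx
    obtain ⟨y, hyO, hyX₀⟩ := mem_closure_iff.mp hzc O hO hxO
    exact hyX₀.2 (hOX ⟨hyO, hyX₀.1⟩)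
  apply hmin X₀ hss hcl
  refine ⟨U ∪ {x}, V, ?_, ⟨x, Or.inr rfl⟩, hVne, ?_, ?_⟩
  · ext z
    constructor
    · rintro ⟨hzT, hz⟩
      by_cases hzx : z = x
      · exact Or.inl (Or.inr hzx)
      · have hzX : z ∉ X := fun h => hz ⟨h, hzx⟩
        have : z ∈ U ∪ V := by rw [← hTX]; exact ⟨hzT, hzX⟩
        rcases this with h | h
        · exact Or.inl (Or.inl h)
        · exact Or.inr h
    · rintro ((hz | hz) | hz)
      · obtain ⟨hzT, hzX⟩ := hUX hz
        exact ⟨hzT, fun h => hzX h.1⟩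
      · rw [Set.mem_singleton_iff] at hz; subst hz
        exact ⟨hxT, fun h => h.2 rfl⟩
      · obtain ⟨hzT, hzX⟩ := hVX hz
        exact ⟨hzT, fun h => hzX h.1⟩
  · rw [closure_union, closure_singleton]
    apply Set.eq_empty_iff_forall_notMem.mpr
    rintro z ⟨hz1 | hz1, hz2⟩
    · exact (Set.eq_empty_iff_forall_notMem.mp h1 z) ⟨hz1, hz2⟩
    · rw [Set.mem_singleton_iff] at hz1; subst hz1; exact hxV hz2
  · apply Set.eq_empty_iff_forall_notMem.mpr
    rintro z ⟨hz1 | hz1, hz2⟩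
    · exact (Set.eq_empty_iff_forall_notMem.mp h2 z) ⟨hz1, hz2⟩
    · rw [Set.mem_singleton_iff] at hz1; subst hz1; exact hxclV hz2

theorem exists_delta {ι : Type*} {x : E} {Bad : Set ι}
    (hfin : Bad.Finite) (sub : ι → Set E) :
    (∀ v ∈ Bad, IsClosed (sub v)) → (∀ v ∈ Bad, x ∉ sub v) →
    ∃ δ > 0, ∀ v ∈ Bad, ∀ y ∈ sub v, δ ≤ dist x y := by
  refine Set.Finite.induction_on (motive := fun Bad _ => (∀ v ∈ Bad, IsClosed (sub v)) →
    (∀ v ∈ Bad, x ∉ sub v) → ∃ δ > 0, ∀ v ∈ Bad, ∀ y ∈ sub v, δ ≤ dist x y) Bad hfin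
    (fun _ _ => ⟨1, one_pos, fun v hv => absurd hv (Set.notMem_empty v)⟩) ?_
  intro a s _ _ ih hcl hx
  obtain ⟨δ, hδ, hδ'⟩ := ih (fun v hv => hcl v (Or.inr hv)) (fun v hv => hx v (Or.inr hv))
  by_cases hne : (sub a).Nonempty
  · have hpos : 0 < Metric.infDist x (sub a) :=
      ((hcl a (Or.inl rfl)).notMem_iff_infDist_pos hne).mp (hx a (Or.inl rfl))
    refine ⟨min δ (Metric.infDist x (sub a)), lt_min hδ hpos, ?_⟩
    rintro v (rfl | hv) y hy
    · exact le_trans (min_le_right _ _) (Metric.infDist_le_dist_of_mem hy)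
    · exact le_trans (min_le_left _ _) (hδ' v hv y hy)
  · refine ⟨δ, hδ, ?_⟩
    rintro v (rfl | hv) y hy
    · exact absurd ⟨y, hy⟩ hne
    · exact hδ' v hv y hy

end ClosedLemma

section VecLemmas

theorem rvec_add {d : ℕ} (a b : Fin d → ℤ) : rvec (a + b) = rvec a + rvec b := by
  funext i; simp only [rvec, Pi.add_apply]; push_cast; ring

theorem rvec_sub {d : ℕ} (a b : Fin d → ℤ) : rvec (a - b) = rvec a - rvec b := by
  funext i; simp only [rvec, Pi.sub_apply]; push_cast; ring

theorem rvec_zero {d : ℕ} : rvec (0 : Fin d → ℤ) = 0 := by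
  funext i; simp [rvec]

theorem rvec_mulVec {d : ℕ} (A : Matrix (Fin d) (Fin d) ℤ) (v : Fin d → ℤ) :
    rvec (A.mulVec v) = (rmat A).mulVec (rvec v) := by
  funext i
  simp only [rvec, rmat, Matrix.mulVec, dotProduct, Matrix.map_apply]
  push_cast
  rfl

theorem finite_int_vec_ball {d : ℕ} (K : ℝ) : {v : Fin d → ℤ | ‖rvec v‖ ≤ K}.Finite := by
  apply Set.Finite.subset (Set.Finite.pi (fun i : Fin d => Set.finite_Icc (-⌈K⌉) ⌈K⌉))
  intro v hv
  simp only [Set.mem_setOf_eq] at hv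
  intro i _
  have hle : |(v i : ℝ)| ≤ K := by
    have := norm_le_pi_norm (rvec v) i
    simpa [rvec, Real.norm_eq_abs] using le_trans this hv
  constructor
  · have h2 : ((-⌈K⌉ : ℤ) : ℝ) ≤ (v i : ℝ) := by
      push_cast
      have := Int.le_ceil K
      have := (abs_le.mp hle).1
      linarith
    exact_mod_cast h2
  · have h1 : (v i : ℝ) ≤ K := (abs_le.mp hle).2
    have h2 : (v i : ℝ) ≤ ((⌈K⌉ : ℤ) : ℝ) := le_trans h1 (Int.le_ceil K)
    exact_mod_cast h2

theorem trT_inter {d : ℕ} (T : Set (Fin d → ℝ)) (a b : Fin d → ℤ) :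
    trT T a ∩ trT T b = (fun z => z + rvec a) '' (T ∩ trT T (b - a)) := by
  ext y
  constructor
  · rintro ⟨⟨t1, ht1, rfl⟩, ⟨t2, ht2, he2⟩⟩
    refine ⟨t1, ⟨ht1, ⟨t2, ht2, ?_⟩⟩, rfl⟩
    rw [rvec_sub]
    have h : t2 + rvec b = t1 + rvec a := he2
    have h3 : t2 + (rvec b - rvec a) = t1 := by
      rw [← add_sub_assoc, h]; abel
    exact h3
  · rintro ⟨t, ⟨htT, ⟨u, hu, he⟩⟩, rfl⟩
    refine ⟨⟨t, htT, rfl⟩, ⟨u, hu, ?_⟩⟩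
    rw [rvec_sub] at he
    rw [← he]; show u + rvec b = u + (rvec b - rvec a) + rvec a; abel

end VecLemmas

section SpecLemmas

theorem expanding_det_complex {d : ℕ} (A : Matrix (Fin d) (Fin d) ℤ) (hexp : Expanding A) :
    (A.map (Int.cast : ℤ → ℂ)).det ≠ 0 := by
  intro h
  set M := A.map (Int.cast : ℤ → ℂ)
  have hnu : ¬ IsUnit M := by
    rw [Matrix.isUnit_iff_isUnit_det, h]
    exact not_isUnit_zero
  have h0 : (0 : ℂ) ∈ spectrum ℂ M := (spectrum.zero_mem_iff ℂ).mpr hnu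
  have hsp : spectrum ℂ (Matrix.toLin' M) = spectrum ℂ M := by
    have := AlgEquiv.spectrum_eq (Matrix.toLinAlgEquiv' : Matrix (Fin d) (Fin d) ℂ ≃ₐ[ℂ]
      ((Fin d → ℂ) →ₗ[ℂ] (Fin d → ℂ))) M
    exact this
  have heig : Module.End.HasEigenvalue (Matrix.toLin' M) 0 := by
    apply Module.End.hasEigenvalue_iff_mem_spectrum.mpr
    rw [hsp]; exact h0
  have := hexp 0 heig
  rw [norm_zero] at this; linarith

theorem expanding_det_int {d : ℕ} (A : Matrix (Fin d) (Fin d) ℤ) (hexp : Expanding A) :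
    A.det ≠ 0 := by
  intro h
  apply expanding_det_complex A hexp
  have : (A.map (Int.cast : ℤ → ℂ)).det = ((A.det : ℤ) : ℂ) :=
    (RingHom.map_det (Int.castRingHom ℂ) A).symm
  rw [this, h]; simp

theorem rmat_det_isUnit {d : ℕ} (A : Matrix (Fin d) (Fin d) ℤ) (hexp : Expanding A) :
    IsUnit (rmat A).det := by
  have : (rmat A).det = ((A.det : ℤ) : ℝ) := (RingHom.map_det (Int.castRingHom ℝ) A).symm
  rw [this]
  exact isUnit_iff_ne_zero.mpr (by exact_mod_cast expanding_det_int A hexp)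

theorem inv_spectrum_small {d : ℕ} (A : Matrix (Fin d) (Fin d) ℤ) (hexp : Expanding A)
    (z : ℂ) (hz : z ∈ spectrum ℂ ((A.map (Int.cast : ℤ → ℂ))⁻¹)) : ‖z‖₊ < 1 := by
  set M := A.map (Int.cast : ℤ → ℂ) with hM
  have hdet : IsUnit M.det := isUnit_iff_ne_zero.mpr (expanding_det_complex A hexp)
  have hMu : IsUnit M := (Matrix.isUnit_iff_isUnit_det M).mpr hdet
  set u := hMu.unit with hu
  have hucoe : (u : Matrix (Fin d) (Fin d) ℂ) = M := hMu.unit_spec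
  have hinvcoe : ((u⁻¹ : (Matrix (Fin d) (Fin d) ℂ)ˣ) : Matrix (Fin d) (Fin d) ℂ) = M⁻¹ := by
    rw [Matrix.coe_units_inv, hucoe]
  have hz' : z ∈ spectrum ℂ ((u⁻¹ : (Matrix (Fin d) (Fin d) ℂ)ˣ) : Matrix (Fin d) (Fin d) ℂ) := by
    rw [hinvcoe]; exact hz
  have hz0 : z ≠ 0 := by
    intro h
    rw [h] at hz'
    exact spectrum.not_isUnit_of_zero_mem _ hz' (u⁻¹).isUnit
  set r : ℂˣ := Units.mk0 z hz0 with hr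
  have hmem : ((r⁻¹ : ℂˣ) : ℂ) ∈ spectrum ℂ (u : Matrix (Fin d) (Fin d) ℂ) := by
    apply (spectrum.inv_mem_iff (r := r⁻¹) (a := u)).mpr
    simpa [hr] using hz'
  have heig : Module.End.HasEigenvalue (Matrix.toLin' M) (z⁻¹) := by
    apply Module.End.hasEigenvalue_iff_mem_spectrum.mpr
    have hsp : spectrum ℂ (Matrix.toLin' M) = spectrum ℂ M :=
      AlgEquiv.spectrum_eq (Matrix.toLinAlgEquiv' : Matrix (Fin d) (Fin d) ℂ ≃ₐ[ℂ]
        ((Fin d → ℂ) →ₗ[ℂ] (Fin d → ℂ))) M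
    rw [hsp]
    have hco : ((r⁻¹ : ℂˣ) : ℂ) = z⁻¹ := by simp [hr]
    rw [hco] at hmem
    rwa [hucoe] at hmem
  have h1 := hexp _ heig
  have habs : ‖z⁻¹‖ = ‖z‖⁻¹ := norm_inv _
  rw [habs] at h1
  have habslt : ‖z‖ < 1 := ((one_lt_inv_iff₀).mp h1).2
  have hn : ‖z‖ < 1 := habslt
  exact_mod_cast hn

theorem exists_pow_inv_norm_small {d : ℕ} (A : Matrix (Fin d) (Fin d) ℤ) (hexp : Expanding A)
    {ε : ℝ} (hε : 0 < ε) :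
    ∃ k : ℕ, ∀ y : Fin d → ℝ, ‖((rmat A)⁻¹ ^ k).mulVec y‖ ≤ ε * ‖y‖ := by
  rcases Nat.eq_zero_or_pos d with hd | hd
  · subst hd
    refine ⟨0, fun y => ?_⟩
    have hz : ∀ z : Fin 0 → ℝ, ‖z‖ = 0 := fun z => by
      have : z = 0 := Subsingleton.elim _ _
      simp [this]
    calc ‖((rmat A)⁻¹ ^ 0).mulVec y‖ = 0 := hz _
    _ ≤ ε * ‖y‖ := by rw [hz y, mul_zero]
  haveI : Nonempty (Fin d) := ⟨⟨0, hd⟩⟩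
  haveI : CompleteSpace (Matrix (Fin d) (Fin d) ℂ) := FiniteDimensional.complete ℂ _
  set M := A.map (Int.cast : ℤ → ℂ) with hM
  set N := M⁻¹ with hN
  have hrad : spectralRadius ℂ N < (1 : NNReal) := by
    apply spectrum.spectralRadius_lt_of_forall_lt
    intro z hz
    exact inv_spectrum_small A hexp z hz
  obtain ⟨s, hs1, hs2⟩ := ENNReal.lt_iff_exists_nnreal_btwn.mp hrad
  have hs2' : s < 1 := by exact_mod_cast hs2
  have htend := spectrum.pow_nnnorm_pow_one_div_tendsto_nhds_spectralRadius N
  have hev : ∀ᶠ n : ℕ in Filter.atTop, ((‖N ^ n‖₊ : ENNReal) ^ (1 / (n : ℝ))) < (s : ENNReal) :=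
    htend.eventually_lt_const hs1
  have hpow : Filter.Tendsto (fun n : ℕ => (s : ℝ) ^ n) Filter.atTop (nhds 0) :=
    tendsto_pow_atTop_nhds_zero_of_lt_one s.coe_nonneg (by exact_mod_cast hs2')
  have hev2 : ∀ᶠ n : ℕ in Filter.atTop, (s : ℝ) ^ n < ε := hpow.eventually_lt_const hε
  obtain ⟨k, hkk⟩ := ((hev.and hev2).and (Filter.eventually_ge_atTop 1)).exists
  obtain ⟨⟨hk1, hk2⟩, hk3⟩ := hkk
  have hkn : (k : ℝ) ≠ 0 := by positivity
  have hNk : (‖N ^ k‖₊ : ENNReal) < ((s ^ k : NNReal) : ENNReal) := by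
    have hlt : ((‖N ^ k‖₊ : ENNReal) ^ (1 / (k : ℝ))) ^ (k : ℝ) < (s : ENNReal) ^ (k : ℝ) :=
      ENNReal.rpow_lt_rpow hk1 (by positivity)
    rw [← ENNReal.rpow_mul, one_div_mul_cancel hkn, ENNReal.rpow_one] at hlt
    rw [ENNReal.coe_pow, ← ENNReal.rpow_natCast (s : ENNReal) k]
    exact hlt
  have hNk' : ‖N ^ k‖ < ε := by
    have hc : ‖N ^ k‖₊ < s ^ k := by exact_mod_cast hNk
    calc ‖N ^ k‖ = ((‖N ^ k‖₊ : ℝ)) := (coe_nnnorm _).symm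
    _ < ((s ^ k : NNReal) : ℝ) := by exact_mod_cast hc
    _ = (s : ℝ) ^ k := by push_cast; ring
    _ < ε := hk2
  refine ⟨k, fun y => ?_⟩
  have hdetR : IsUnit (rmat A).det := rmat_det_isUnit A hexp
  have hmapinv : ((rmat A)⁻¹).map (Complex.ofRealHom : ℝ →+* ℂ) = N := by
    have hmap : (rmat A).map (Complex.ofRealHom : ℝ →+* ℂ) = M := by
      ext i j
      simp [rmat, hM, Matrix.map_apply]
    apply (Matrix.inv_eq_right_inv _).symm
    rw [← hmap, ← Matrix.map_mul, Matrix.mul_nonsing_inv _ hdetR]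
    exact Matrix.map_one _ (map_zero _) (map_one _)
  have hmappow : (((rmat A)⁻¹) ^ k).map (Complex.ofRealHom : ℝ →+* ℂ) = N ^ k := by
    rw [← hmapinv]
    have := map_pow ((Complex.ofRealHom : ℝ →+* ℂ).mapMatrix) ((rmat A)⁻¹) k
    simpa [RingHom.mapMatrix_apply] using this
  set yc : Fin d → ℂ := fun i => ((y i : ℝ) : ℂ) with hyc
  have hcastvec : (N ^ k).mulVec yc = fun i => ((((rmat A)⁻¹ ^ k).mulVec y i : ℝ) : ℂ) := by
    rw [← hmappow]
    funext i
    simp only [Matrix.mulVec, dotProduct, Matrix.map_apply, hyc]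
    push_cast
    rfl
  have hnormcast : ∀ x : Fin d → ℝ, ‖(fun i => ((x i : ℝ) : ℂ))‖ = ‖x‖ := by
    intro x
    simp only [Pi.norm_def]
    congr 1
    apply Finset.sup_congr rfl
    intro i _
    simp [nnnorm]
  calc ‖((rmat A)⁻¹ ^ k).mulVec y‖
      = ‖(N ^ k).mulVec yc‖ := by rw [hcastvec, hnormcast]
    _ ≤ ‖N ^ k‖ * ‖yc‖ := Matrix.linfty_opNorm_mulVec _ _
    _ ≤ ε * ‖y‖ := by
        rw [hyc, hnormcast y]
        exact mul_le_mul (le_of_lt hNk') le_rfl (norm_nonneg _) (le_of_lt hε)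

end SpecLemmas

section SubdivisionLemmas

theorem mem_Vset_zero {d : ℕ} {A : Matrix (Fin d) (Fin d) ℤ} {D : Set (Fin d → ℤ)} :
    Vset A D 0 = {0} := by
  ext v
  constructor
  · rintro ⟨dig, _, hsum⟩
    simp at hsum
    simp [hsum]
  · rintro rfl
    exact ⟨(fun j => Fin.elim0 j), fun k => Fin.elim0 k, by simp⟩

theorem mem_Vset_succ {d : ℕ} {A : Matrix (Fin d) (Fin d) ℤ} {D : Set (Fin d → ℤ)} {k : ℕ}
    {e v : Fin d → ℤ} (he : e ∈ D) (hv : v ∈ Vset A D k) :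
    e + A.mulVec v ∈ Vset A D (k + 1) := by
  obtain ⟨dig, hdig, rfl⟩ := hv
  refine ⟨Fin.cons e dig, ?_, ?_⟩
  · intro j
    refine Fin.cases ?_ ?_ j
    · simpa using he
    · intro i; simpa using hdig i
  · rw [Fin.sum_univ_succ]
    simp only [Fin.cons_zero, Fin.cons_succ, Fin.val_zero, pow_zero, Matrix.one_mulVec]
    congr 1
    rw [show (A *ᵥ ∑ j : Fin k, A ^ (j : ℕ) *ᵥ dig j) = ∑ j : Fin k, A *ᵥ (A ^ (j : ℕ) *ᵥ dig j)
      from map_sum A.mulVecLin _ _]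
    apply Finset.sum_congr rfl
    intro i _
    rw [Matrix.mulVec_mulVec, ← pow_succ']
    rfl

theorem Vset_succ_decomp {d : ℕ} {A : Matrix (Fin d) (Fin d) ℤ} {D : Set (Fin d → ℤ)} {k : ℕ}
    {w : Fin d → ℤ} (hw : w ∈ Vset A D (k + 1)) :
    ∃ e ∈ D, ∃ v ∈ Vset A D k, w = e + A.mulVec v := by
  obtain ⟨dig, hdig, rfl⟩ := hw
  refine ⟨dig 0, hdig 0, ∑ j : Fin k, (A ^ (j : ℕ)).mulVec (dig j.succ),
    ⟨fun j => dig j.succ, fun j => hdig _, rfl⟩, ?_⟩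
  rw [Fin.sum_univ_succ]
  simp only [Fin.val_zero, pow_zero, Matrix.one_mulVec]
  congr 1
  rw [show (A *ᵥ ∑ j : Fin k, A ^ (j : ℕ) *ᵥ dig j.succ)
    = ∑ j : Fin k, A *ᵥ (A ^ (j : ℕ) *ᵥ dig j.succ) from map_sum A.mulVecLin _ _]
  apply Finset.sum_congr rfl
  intro i _
  rw [Matrix.mulVec_mulVec, ← pow_succ']
  rfl

theorem subtile_decomp {d : ℕ} (A : Matrix (Fin d) (Fin d) ℤ) (D : Set (Fin d → ℤ))
    (T : Set (Fin d → ℝ)) (hdet : IsUnit (rmat A).det)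
    (hSA : (rmat A).mulVec '' T = ⋃ e ∈ D, (fun x => x + rvec e) '' T) :
    ∀ k : ℕ, T = ⋃ v ∈ Vset A D k, ((rmat A)⁻¹ ^ k).mulVec '' (trT T v) := by
  have hBA : (rmat A)⁻¹ * rmat A = 1 := Matrix.nonsing_inv_mul _ hdet
  have base1 : T = ⋃ e ∈ D, ((rmat A)⁻¹).mulVec '' ((fun x => x + rvec e) '' T) := by
    have h1 : ((rmat A)⁻¹).mulVec '' ((rmat A).mulVec '' T) = T := by
      rw [← Set.image_comp]
      have hco : ((rmat A)⁻¹).mulVec ∘ (rmat A).mulVec = id := by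
        funext x
        simp [Function.comp, Matrix.mulVec_mulVec, hBA, Matrix.one_mulVec]
      rw [hco, Set.image_id]
    calc T = ((rmat A)⁻¹).mulVec '' ((rmat A).mulVec '' T) := h1.symm
      _ = ((rmat A)⁻¹).mulVec '' (⋃ e ∈ D, (fun x => x + rvec e) '' T) := by rw [hSA]
      _ = ⋃ e ∈ D, ((rmat A)⁻¹).mulVec '' ((fun x => x + rvec e) '' T) := by
          rw [Set.image_iUnion₂]
  intro k
  induction k with
  | zero =>
    rw [mem_Vset_zero]
    simp only [Set.mem_singleton_iff, Set.iUnion_iUnion_eq_left, pow_zero, Matrix.one_mulVec]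
    have h2 : trT T 0 = T := by
      simp [trT, rvec_zero]
    rw [h2, Set.image_id']
  | succ k ih =>
    conv_lhs => rw [ih]
    apply Set.Subset.antisymm
    · apply Set.iUnion₂_subset
      intro v hv
      have hexp : trT T v = ⋃ e ∈ D,
          (fun x => x + rvec v) '' (((rmat A)⁻¹).mulVec '' ((fun x => x + rvec e) '' T)) := by
        rw [trT]
        conv_lhs => rw [base1]
        rw [Set.image_iUnion₂]
      rw [hexp, Set.image_iUnion₂]
      apply Set.iUnion₂_subset
      intro e he
      have hkey : ((rmat A)⁻¹ ^ k).mulVec ''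
            ((fun x => x + rvec v) '' (((rmat A)⁻¹).mulVec '' ((fun x => x + rvec e) '' T)))
          = ((rmat A)⁻¹ ^ (k+1)).mulVec '' (trT T (e + A.mulVec v)) := by
        rw [trT, ← Set.image_comp, ← Set.image_comp, ← Set.image_comp, ← Set.image_comp]
        apply Set.image_congr
        intro t _
        simp only [Function.comp]
        rw [rvec_add, rvec_mulVec]
        have hpow : (rmat A)⁻¹ ^ (k+1) = (rmat A)⁻¹ ^ k * (rmat A)⁻¹ := pow_succ _ _
        have hcl : (rmat A)⁻¹ ^ (k+1) * rmat A = (rmat A)⁻¹ ^ k := by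
          rw [hpow, Matrix.mul_assoc, hBA, Matrix.mul_one]
        simp only [Matrix.mulVec_add, Matrix.mulVec_mulVec, hcl, ← hpow]
        abel
      rw [hkey]
      exact Set.subset_iUnion₂_of_subset _ (mem_Vset_succ he hv) Set.Subset.rfl
    · apply Set.iUnion₂_subset
      intro w hw
      obtain ⟨e, he, v, hv, rfl⟩ := Vset_succ_decomp hw
      apply Set.subset_iUnion₂_of_subset v hv
      have hexp : trT T v = ⋃ e ∈ D,
          (fun x => x + rvec v) '' (((rmat A)⁻¹).mulVec '' ((fun x => x + rvec e) '' T)) := by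
        rw [trT]
        conv_lhs => rw [base1]
        rw [Set.image_iUnion₂]
      rw [hexp, Set.image_iUnion₂]
      apply Set.subset_iUnion₂_of_subset e he
      have hkey : ((rmat A)⁻¹ ^ k).mulVec ''
            ((fun x => x + rvec v) '' (((rmat A)⁻¹).mulVec '' ((fun x => x + rvec e) '' T)))
          = ((rmat A)⁻¹ ^ (k+1)).mulVec '' (trT T (e + A.mulVec v)) := by
        rw [trT, ← Set.image_comp, ← Set.image_comp, ← Set.image_comp, ← Set.image_comp]
        apply Set.image_congr
        intro t _
        simp only [Function.comp]
        rw [rvec_add, rvec_mulVec]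
        have hpow : (rmat A)⁻¹ ^ (k+1) = (rmat A)⁻¹ ^ k * (rmat A)⁻¹ := pow_succ _ _
        have hcl : (rmat A)⁻¹ ^ (k+1) * rmat A = (rmat A)⁻¹ ^ k := by
          rw [hpow, Matrix.mul_assoc, hBA, Matrix.mul_one]
        simp only [Matrix.mulVec_add, Matrix.mulVec_mulVec, hcl, ← hpow]
        abel
      rw [hkey]

end SubdivisionLemmas

theorem statement2 {d : ℕ} (A : Matrix (Fin d) (Fin d) ℤ) (D : Set (Fin d → ℤ))
    (T : Set (Fin d → ℝ)) (htile : IsZdTile A D T) (hconn : IsConnected T) :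
    (∃ z ∈ T, SepUnion (T \ {z})) ∨
      ∀ X : Set (Fin d → ℝ), IsIrredCutSet T X →
        ∃ X₁ : Set (Fin d → ℝ),
          X₁ ⊆ {x | ∃ k : ℕ, ∃ v s : Fin d → ℤ, (∃ p, T ∩ trT T s = {p}) ∧
              x ∈ (fun y => ((rmat A)⁻¹ ^ k).mulVec y +
                ((rmat A)⁻¹ ^ k).mulVec (rvec v)) '' (T ∩ trT T s)} ∧
          X = {x ∈ X | AccPt x (𝓟 X)} ∪ X₁ := by
  classical
  by_cases hcp : ∃ z ∈ T, SepUnion (T \ {z})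
  · exact Or.inl hcp
  right
  obtain ⟨hexp, hres, hSA, hint, hcover, hdisj⟩ := htile
  obtain ⟨hTne, hTcomp, hSAeq⟩ := hSA
  have hTcl : IsClosed T := hTcomp.isClosed
  have hdet : IsUnit (rmat A).det := rmat_det_isUnit A hexp
  have hpre : ∀ p : Fin d → ℝ, IsPreconnected (T \ {p}) := by
    intro p
    by_cases hp : p ∈ T
    · exact isPreconnected_of_not_sepUnion (fun h => hcp ⟨p, hp, h⟩)
    · rw [Set.diff_singleton_eq_self hp]
      exact hconn.isPreconnected
  intro X hX
  obtain ⟨⟨hXT, hsepX⟩, hmin⟩ := hX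
  obtain ⟨U, V, hTX, hUne, hVne, h1, h2⟩ := hsepX
  have hXcl : IsClosed X := irred_cut_closed hTcl hXT hTX hUne hVne h1 h2 hmin
  refine ⟨{x ∈ X | ¬ AccPt x (𝓟 X)}, ?_, ?_⟩
  swap
  · ext z
    simp only [Set.mem_union, Set.mem_setOf_eq]
    tauto
  intro x hx
  obtain ⟨hxX, hnacc⟩ := hx
  rw [accPt_iff_nhds] at hnacc
  push_neg at hnacc
  obtain ⟨Onb, hOnbmem, hiso⟩ := hnacc
  obtain ⟨ε, hε, hball⟩ := Metric.mem_nhds_iff.mp hOnbmem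
  have hxT : x ∈ T := hXT hxX
  -- T has at least two points
  have hX2 : ∃ x', x' ∈ X ∧ x' ≠ x := by
    by_contra hcon
    push_neg at hcon
    have hXx : X = {x} := Set.Subset.antisymm (fun y hy => hcon y hy)
      (by rintro y rfl; exact hxX)
    exact hcp ⟨x, hxT, by
      rw [show T \ {x} = T \ X by rw [hXx]]
      exact ⟨U, V, hTX, hUne, hVne, h1, h2⟩⟩
  obtain ⟨x', hx'X, hx'ne⟩ := hX2
  -- diameter bound for T
  obtain ⟨C, hC⟩ := Metric.isBounded_iff.mp hTcomp.isBounded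
  have hC0 : 0 ≤ C := le_trans dist_nonneg (hC hTne.some_mem hTne.some_mem)
  have hεpos : 0 < ε / (2 * (C + 1)) := by positivity
  obtain ⟨k, hk⟩ := exists_pow_inv_norm_small A hexp hεpos
  -- the contraction φ and its properties
  set φ : (Fin d → ℝ) → Fin d → ℝ := ((rmat A)⁻¹ ^ k).mulVec with hφdef
  have hAB : rmat A * (rmat A)⁻¹ = 1 := Matrix.mul_nonsing_inv _ hdet
  have hBA : (rmat A)⁻¹ * rmat A = 1 := Matrix.nonsing_inv_mul _ hdet
  have hcomm : Commute (rmat A) (rmat A)⁻¹ := by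
    show rmat A * (rmat A)⁻¹ = (rmat A)⁻¹ * rmat A
    rw [hAB, hBA]
  have hpowAB : (rmat A) ^ k * ((rmat A)⁻¹) ^ k = 1 := by
    rw [← Commute.mul_pow hcomm, hAB, one_pow]
  have hpowBA : ((rmat A)⁻¹) ^ k * (rmat A) ^ k = 1 := by
    rw [← Commute.mul_pow hcomm.symm, hBA, one_pow]
  have hφinj : Function.Injective φ := by
    intro a b hab
    have h2' := congrArg (((rmat A) ^ k).mulVec) hab
    rwa [hφdef, Matrix.mulVec_mulVec, Matrix.mulVec_mulVec, hpowAB, Matrix.one_mulVec,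
      Matrix.one_mulVec] at h2'
  have hφcont : Continuous φ := by
    have he : φ = ⇑(Matrix.mulVecLin ((rmat A)⁻¹ ^ k)) := by
      funext y; rfl
    rw [he]; exact LinearMap.continuous_of_finiteDimensional _
  have hφAk : ∀ y, φ (((rmat A) ^ k).mulVec y) = y := fun y => by
    rw [hφdef, Matrix.mulVec_mulVec, hpowBA, Matrix.one_mulVec]
  have hAkφ : ∀ y, ((rmat A) ^ k).mulVec (φ y) = y := fun y => by
    rw [hφdef, Matrix.mulVec_mulVec, hpowAB, Matrix.one_mulVec]
  -- the level-k subtiles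
  set sub : (Fin d → ℤ) → Set (Fin d → ℝ) := fun v => φ '' (trT T v) with hsubdef
  have hdecomp : T = ⋃ v ∈ Vset A D k, sub v := subtile_decomp A D T hdet hSAeq k
  have htrc : ∀ v, IsCompact (trT T v) := fun v =>
    hTcomp.image (continuous_id.add continuous_const)
  have hsubcl : ∀ v, IsClosed (sub v) := fun v => ((htrc v).image hφcont).isClosed
  have hsubT : ∀ v ∈ Vset A D k, sub v ⊆ T := by
    intro v hv
    conv_rhs => rw [hdecomp]
    exact Set.subset_biUnion_of_mem hv
  set Sv : Set (Fin d → ℤ) := {v | v ∈ Vset A D k ∧ x ∈ sub v} with hSvdef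
  have hv₀ex : ∃ v₀, v₀ ∈ Sv := by
    have hx2 : x ∈ ⋃ v ∈ Vset A D k, sub v := hdecomp ▸ hxT
    simp only [Set.mem_iUnion] at hx2
    obtain ⟨v₀, hv₀, hxv₀⟩ := hx2
    exact ⟨v₀, hv₀, hxv₀⟩
  obtain ⟨v₀, hv₀S⟩ := hv₀ex
  -- subtiles through x lie in the isolating ball
  have hsubball : ∀ v, x ∈ sub v → sub v ⊆ Metric.ball x ε := by
    rintro v hxv y ⟨a, ha, rfl⟩
    obtain ⟨b, hb, hbx⟩ := hxv
    obtain ⟨t1, ht1, rfl⟩ := ha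
    obtain ⟨t2, ht2, rfl⟩ := hb
    rw [Metric.mem_ball, ← hbx, dist_eq_norm]
    have heq : φ (t1 + rvec v) - φ (t2 + rvec v) = ((rmat A)⁻¹ ^ k).mulVec (t1 - t2) := by
      have hmap := map_sub (Matrix.mulVecLin ((rmat A)⁻¹ ^ k)) (t1 + rvec v) (t2 + rvec v)
      simp only [Matrix.mulVecLin_apply] at hmap
      rw [hφdef]
      rw [show (t1 + rvec v) - (t2 + rvec v) = t1 - t2 by abel] at hmap
      exact hmap.symm
    rw [heq]
    calc ‖((rmat A)⁻¹ ^ k).mulVec (t1 - t2)‖ ≤ ε / (2 * (C + 1)) * ‖t1 - t2‖ := hk _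
      _ ≤ ε / (2 * (C + 1)) * C := by
          apply mul_le_mul_of_nonneg_left _ (le_of_lt hεpos)
          rw [← dist_eq_norm]; exact hC ht1 ht2
      _ < ε := by
          rw [div_mul_eq_mul_div, div_lt_iff₀ (by positivity)]
          nlinarith
  -- a metric neighborhood of x inside the union of subtiles through x
  set CA := ‖(rmat A) ^ k‖ with hCAdef
  have hCA : ∀ w, ‖((rmat A) ^ k).mulVec w‖ ≤ CA * ‖w‖ := fun w =>
    Matrix.linfty_opNorm_mulVec _ _
  have hCA0 : 0 ≤ CA := norm_nonneg _
  obtain ⟨CT, hCT⟩ := isBounded_iff_forall_norm_le.mp hTcomp.isBounded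
  set K := CA * (‖x‖ + 1) + CT with hKdef
  have hvbound : ∀ y ∈ T, dist y x < 1 → ∀ v, y ∈ sub v → ‖rvec v‖ ≤ K := by
    intro y hyT hyd v hyv
    obtain ⟨a, ha, hay⟩ := hyv
    obtain ⟨t, htT, rfl⟩ := ha
    have hAky : ((rmat A) ^ k).mulVec y = t + rvec v := by rw [← hay, hAkφ]
    have hrv : rvec v = ((rmat A) ^ k).mulVec y - t := by rw [hAky]; abel
    rw [hrv]
    calc ‖((rmat A) ^ k).mulVec y - t‖ ≤ ‖((rmat A) ^ k).mulVec y‖ + ‖t‖ := norm_sub_le _ _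
      _ ≤ CA * ‖y‖ + CT := add_le_add (hCA y) (hCT t htT)
      _ ≤ CA * (‖x‖ + 1) + CT := by
          have hy : ‖y‖ ≤ ‖x‖ + 1 := by
            calc ‖y‖ = ‖x + (y - x)‖ := by congr 1; abel
              _ ≤ ‖x‖ + ‖y - x‖ := norm_add_le _ _
              _ ≤ ‖x‖ + 1 := by
                  have hd : ‖y - x‖ ≤ 1 := le_of_lt (by rwa [dist_eq_norm] at hyd)
                  linarith
          have := mul_le_mul_of_nonneg_left hy hCA0; linarith
  set Bad := {v : Fin d → ℤ | ‖rvec v‖ ≤ K ∧ x ∉ sub v} with hBaddef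
  have hBadfin : Bad.Finite := (finite_int_vec_ball K).subset (fun v hv => hv.1)
  obtain ⟨δ₀, hδ₀, hδ⟩ := exists_delta hBadfin sub (fun v _ => hsubcl v) (fun v hv => hv.2)
  set N := ⋃ v ∈ Sv, sub v with hNdef
  have hNnbhd : ∀ y ∈ T, dist y x < min δ₀ 1 → y ∈ N := by
    intro y hyT hyd
    have hy2 : y ∈ ⋃ v ∈ Vset A D k, sub v := hdecomp ▸ hyT
    simp only [Set.mem_iUnion] at hy2
    obtain ⟨v, hvV, hyv⟩ := hy2
    by_cases hxv : x ∈ sub v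
    · exact Set.mem_biUnion (show v ∈ Sv from ⟨hvV, hxv⟩) hyv
    · exfalso
      have hvB : v ∈ Bad := ⟨hvbound y hyT (lt_of_lt_of_le hyd (min_le_right _ _)) v hyv, hxv⟩
      have hge := hδ v hvB y hyv
      rw [dist_comm] at hge
      have hlt : dist y x < δ₀ := lt_of_lt_of_le hyd (min_le_left _ _)
      linarith
  -- case split on connectivity of the subtile graph at x
  by_cases hGconn : ∀ w ∈ Sv, Relation.ReflTransGen
      (fun a b => ((sub a \ {x}) ∩ (sub b \ {x})).Nonempty ∧ a ∈ Sv ∧ b ∈ Sv) v₀ w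
  · -- connected case: contradiction with irreducibility
    exfalso
    have hsubpre : ∀ v ∈ Sv, IsPreconnected (sub v \ {x}) := by
      intro v hv
      set g : (Fin d → ℝ) → Fin d → ℝ := fun t => φ (t + rvec v) with hgdef
      have hgc : Continuous g := hφcont.comp (continuous_id.add continuous_const)
      have hginj : Function.Injective g := fun a b hab => add_right_cancel (hφinj hab)
      have hgT : g '' T = sub v := by
        show g '' T = φ '' (trT T v)
        rw [trT, ← Set.image_comp]
        rfl
      have hgx : g (((rmat A) ^ k).mulVec x - rvec v) = x := by
        show φ ((((rmat A) ^ k).mulVec x - rvec v) + rvec v) = x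
        rw [sub_add_cancel, hφAk]
      have hgim : g '' (T \ {((rmat A) ^ k).mulVec x - rvec v}) = sub v \ {x} := by
        rw [Set.image_diff hginj, Set.image_singleton, hgT, hgx]
      rw [← hgim]
      exact (hpre _).image g hgc.continuousOn
    have hNxpre : IsPreconnected (N \ {x}) := by
      have hrw : N \ {x} = ⋃ v ∈ Sv, (sub v \ {x}) := by
        rw [hNdef]
        simp only [Set.iUnion_diff]
      rw [hrw]
      apply IsPreconnected.biUnion_of_reflTransGen (fun v hv => hsubpre v hv)
      intro i hi j hj
      have hsymm : Symmetric (fun a b => ((sub a \ {x}) ∩ (sub b \ {x})).Nonempty ∧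
          a ∈ Sv ∧ b ∈ Sv) := by
        intro a b hab
        exact ⟨by rw [Set.inter_comm]; exact hab.1, hab.2.2, hab.2.1⟩
      refine Relation.ReflTransGen.mono ?_ _ _
        (Relation.ReflTransGen.trans
          (Std.Symm.symm (self := @Relation.ReflTransGen.stdSymm _
            (fun a b => ((sub a \ {x}) ∩ (sub b \ {x})).Nonempty ∧ a ∈ Sv ∧ b ∈ Sv) ⟨fun a b h => hsymm h⟩) _ _ (hGconn i hi)) (hGconn j hj))
      rintro a b ⟨hne, haS, _⟩
      exact ⟨hne, haS⟩
    have hNX : N ∩ X ⊆ {x} := by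
      rintro z ⟨hzN, hzX⟩
      rw [hNdef] at hzN
      simp only [Set.mem_iUnion] at hzN
      obtain ⟨v, hvS, hzv⟩ := hzN
      have hzball : z ∈ Metric.ball x ε := hsubball v hvS.2 hzv
      exact hiso z ⟨hball hzball, hzX⟩
    have hNT : N ⊆ T := by
      rw [hNdef]
      apply Set.iUnion₂_subset
      intro v hv
      exact hsubT v hv.1
    have hNdiffUV : N \ {x} ⊆ U ∪ V := by
      rintro z ⟨hzN, hzx⟩
      rw [← hTX]
      exact ⟨hNT hzN, fun hzX => hzx (hNX ⟨hzN, hzX⟩)⟩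
    set δ := min (min δ₀ 1) ε with hδdef
    have hδpos : 0 < δ := lt_min (lt_min hδ₀ one_pos) hε
    have hObX : Metric.ball x δ ∩ X ⊆ {x} := by
      rintro z ⟨hzb, hzX⟩
      exact hiso z ⟨hball (Metric.ball_subset_ball (min_le_right _ _) hzb), hzX⟩
    have hOT : ∀ z, z ∈ Metric.ball x δ ∩ T → z ∈ N := fun z hz =>
      hNnbhd z hz.2 (lt_of_lt_of_le hz.1 (min_le_left _ _))
    rcases preconn_subset_or hNxpre hNdiffUV h1 h2 with hNU | hNV
    · exact endgame hTX hVne h1 h2 hmin hXT hXcl hxX Metric.isOpen_ball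
        (Metric.mem_ball_self hδpos) hObX
        (by rintro z ⟨⟨hzO, hzT⟩, hzx⟩; exact hNU ⟨hOT z ⟨hzO, hzT⟩, hzx⟩)
    · have hTX' : T \ X = V ∪ U := by rw [hTX, Set.union_comm]
      have h1' : closure V ∩ U = ∅ := by rw [Set.inter_comm]; exact h2
      have h2' : V ∩ closure U = ∅ := by rw [Set.inter_comm]; exact h1
      exact endgame hTX' hUne h1' h2' hmin hXT hXcl hxX Metric.isOpen_ball
        (Metric.mem_ball_self hδpos) hObX
        (by rintro z ⟨⟨hzO, hzT⟩, hzx⟩; exact hNV ⟨hOT z ⟨hzO, hzT⟩, hzx⟩)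
  · -- disconnected case: x is in the exceptional set
    push_neg at hGconn
    obtain ⟨w₀, hw₀S, hnopath⟩ := hGconn
    have hsing : sub v₀ ∩ sub w₀ = {x} := by
      apply Set.Subset.antisymm
      · intro y hy
        rw [Set.mem_singleton_iff]
        by_contra hyne
        exact hnopath (Relation.ReflTransGen.single
          ⟨⟨y, ⟨hy.1, hyne⟩, ⟨hy.2, hyne⟩⟩, hv₀S, hw₀S⟩)
      · rintro y hy
        rw [Set.mem_singleton_iff] at hy
        subst hy
        exact ⟨hv₀S.2, hw₀S.2⟩
    set g : (Fin d → ℝ) → Fin d → ℝ := fun y => φ (y + rvec v₀) with hgdef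
    have hginj : Function.Injective g := fun a b hab => add_right_cancel (hφinj hab)
    have hgim : g '' (T ∩ trT T (w₀ - v₀)) = {x} := by
      have hcomp := Set.image_comp φ (fun z => z + rvec v₀) (T ∩ trT T (w₀ - v₀))
      calc g '' (T ∩ trT T (w₀ - v₀))
          = (φ ∘ fun z => z + rvec v₀) '' (T ∩ trT T (w₀ - v₀)) := rfl
        _ = φ '' ((fun z => z + rvec v₀) '' (T ∩ trT T (w₀ - v₀))) := hcomp
        _ = φ '' (trT T v₀ ∩ trT T w₀) := by rw [← trT_inter]
        _ = φ '' (trT T v₀) ∩ φ '' (trT T w₀) := Set.image_inter hφinj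
        _ = sub v₀ ∩ sub w₀ := rfl
        _ = {x} := hsing
    have hxin : x ∈ g '' (T ∩ trT T (w₀ - v₀)) := by
      rw [hgim]; exact rfl
    obtain ⟨p, hpmem, hpx⟩ := hxin
    have hsingleton : T ∩ trT T (w₀ - v₀) = {p} := by
      apply Set.Subset.antisymm
      · intro q hq
        rw [Set.mem_singleton_iff]
        apply hginj
        have hq' : g q ∈ ({x} : Set (Fin d → ℝ)) := by
          rw [← hgim]; exact Set.mem_image_of_mem g hq
        rw [Set.mem_singleton_iff] at hq'
        rw [hq', hpx]
      · rintro q hq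
        rw [Set.mem_singleton_iff] at hq
        subst hq
        exact hpmem
    refine ⟨k, v₀, w₀ - v₀, ⟨p, hsingleton⟩, p, hpmem, ?_⟩
    show ((rmat A)⁻¹ ^ k).mulVec p + ((rmat A)⁻¹ ^ k).mulVec (rvec v₀) = x
    rw [← Matrix.mulVec_add, ← hpx]
end
end
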